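/- Let A = H with attracting/repelling fixed points s₁ > 0 > u₁ and B with fixed points s₂ > 0 > u₂, both hyperbolic elements of SL(2,ℝ) (trace > 2), with u₂ < u₁ < 0 < s₁ < s₂. Then for every nonempty finite word w over {A, B}, the product matrix [w] lies in SL(2,ℝ) with trace ≥ 2, and if w contains both letters then tr[w] > 2. -/

import Mathlib

open Matrix

/-- The hyperbolic matrix `H^λ_{s,u}` with attracting fixed point `s` and
repelling fixed point `u`. -/
noncomputable def Hmat (l s u : ℝ) : Matrix (Fin 2) (Fin 2) ℝ :=
  !![s, u; 1, 1] * !![l, 0; 0, l⁻¹] * (!![s, u; 1, 1])⁻¹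

def AllPos (M : Matrix (Fin 2) (Fin 2) ℝ) : Prop :=
  0 < M 0 0 ∧ 0 < M 0 1 ∧ 0 < M 1 0 ∧ 0 < M 1 1

lemma AllPos.mul {M N : Matrix (Fin 2) (Fin 2) ℝ} (hM : AllPos M) (hN : AllPos N) :
    AllPos (M * N) := by
  obtain ⟨a, b, c, d⟩ := hM
  obtain ⟨a', b', c', d'⟩ := hN
  refine ⟨?_, ?_, ?_, ?_⟩ <;>
    simp only [Matrix.mul_apply, Fin.sum_univ_two] <;> positivity

lemma Hmat_eq (l s u : ℝ) (hu : u < 0) (hs : 0 < s) (hl : 1 < l) :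
    Hmat l s u = (s - u)⁻¹ •
      !![s*l - u*l⁻¹, s*u*l⁻¹ - s*u*l; l - l⁻¹, s*l⁻¹ - u*l] := by
  have hdet : (!![s, u; 1, 1] : Matrix (Fin 2) (Fin 2) ℝ).det = s - u := by
    simp [Matrix.det_fin_two_of]
  have hne : (s - u) ≠ 0 := by nlinarith
  have hinv : (!![s, u; 1, 1] : Matrix (Fin 2) (Fin 2) ℝ)⁻¹ =
      (s - u)⁻¹ • !![1, -u; -1, s] := by
    rw [Matrix.inv_def, hdet, Matrix.adjugate_fin_two]
    simp [Ring.inverse_eq_inv]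
  rw [Hmat, hinv]
  ext i j
  fin_cases i <;> fin_cases j <;>
    simp [Matrix.mul_apply, Fin.sum_univ_two] <;> ring

lemma Hmat_pos (l s u : ℝ) (hu : u < 0) (hs : 0 < s) (hl : 1 < l) :
    AllPos (Hmat l s u) := by
  rw [Hmat_eq l s u hu hs hl]
  have h1 : (0:ℝ) < (s - u)⁻¹ := inv_pos.2 (by linarith)
  have hl0 : (0:ℝ) < l := by linarith
  have hli : l⁻¹ < l := by
    rw [inv_lt_iff_one_lt_mul₀ hl0]; nlinarith
  have hli0 : (0:ℝ) < l⁻¹ := by positivity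
  refine ⟨?_, ?_, ?_, ?_⟩ <;> simp
  · exact mul_pos h1 (by nlinarith [mul_pos hs hl0, mul_pos hli0 (neg_pos.2 hu)])
  · exact mul_pos h1 (by nlinarith [mul_pos (mul_pos hs (neg_pos.2 hu)) (sub_pos.2 hli)])
  · exact mul_pos h1 (by linarith)
  · exact mul_pos h1 (by nlinarith [mul_pos hs hli0, mul_pos hl0 (neg_pos.2 hu)])

lemma Hmat_det (l s u : ℝ) (hu : u < 0) (hs : 0 < s) (hl : 1 < l) :
    (Hmat l s u).det = 1 := by
  have hne : (s - u) ≠ 0 := by nlinarith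
  have hl0 : (l:ℝ) ≠ 0 := by positivity
  have hPdet : (!![s, u; 1, 1] : Matrix (Fin 2) (Fin 2) ℝ).det = s - u := by
    simp [Matrix.det_fin_two_of]
  rw [Hmat, Matrix.det_mul, Matrix.det_mul, Matrix.det_nonsing_inv, hPdet]
  rw [Matrix.det_fin_two_of]
  field_simp
  simp [Ring.inverse_eq_inv, hne]

/-- For a co-parallel pair in normal form, every nonempty word product lies in
`SL(2,ℝ)` with trace `≥ 2`, strictly `> 2` if the word uses both letters. -/
theorem word_product_coparallel
    (l₁ l₂ s₁ s₂ u₁ u₂ : ℝ) (hl₁ : 1 < l₁) (hl₂ : 1 < l₂)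
    (hu : u₂ < u₁) (hu₁ : u₁ < 0) (hs₁ : 0 < s₁) (hs : s₁ < s₂)
    (A B : Matrix (Fin 2) (Fin 2) ℝ)
    (hA : A = Hmat l₁ s₁ u₁) (hB : B = Hmat l₂ s₂ u₂)
    (w : List Bool) (hw : w ≠ []) :
    ((w.map (fun i => cond i B A)).prod).det = 1 ∧
    2 ≤ ((w.map (fun i => cond i B A)).prod).trace ∧
    ((false ∈ w ∧ true ∈ w) →
      2 < ((w.map (fun i => cond i B A)).prod).trace) := by
  have hu₂ : u₂ < 0 := by linarith
  have hs₂ : 0 < s₂ := by linarith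
  have hApos : AllPos A := hA ▸ Hmat_pos l₁ s₁ u₁ hu₁ hs₁ hl₁
  have hBpos : AllPos B := hB ▸ Hmat_pos l₂ s₂ u₂ hu₂ hs₂ hl₂
  have hAdet : A.det = 1 := hA ▸ Hmat_det l₁ s₁ u₁ hu₁ hs₁ hl₁
  have hBdet : B.det = 1 := hB ▸ Hmat_det l₂ s₂ u₂ hu₂ hs₂ hl₂
  have key : ∀ (v : List Bool), v ≠ [] →
      AllPos ((v.map (fun i => cond i B A)).prod) ∧
      ((v.map (fun i => cond i B A)).prod).det = 1 := by
    intro v hv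
    induction v with
    | nil => exact absurd rfl hv
    | cons x t ih =>
      rcases eq_or_ne t [] with rfl | ht
      · cases x <;> simpa using ⟨by assumption, by assumption⟩
      · obtain ⟨hpos, hdet⟩ := ih ht
        constructor
        · simp only [List.map_cons, List.prod_cons]
          exact AllPos.mul (by cases x <;> simpa) hpos
        · simp only [List.map_cons, List.prod_cons, Matrix.det_mul, hdet]
          cases x <;> simp [hAdet, hBdet]
  obtain ⟨⟨ha, hb, hc, hd⟩, hdet⟩ := key w hw
  set M := (w.map (fun i => cond i B A)).prod
  have hdet2 : M 0 0 * M 1 1 - M 0 1 * M 1 0 = 1 := by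
    rw [← Matrix.det_fin_two]; exact hdet
  have htr : M.trace = M 0 0 + M 1 1 := Matrix.trace_fin_two M
  have h2 : 2 < M.trace := by
    rw [htr]
    nlinarith [sq_nonneg (M 0 0 - M 1 1), mul_pos hb hc]
  exact ⟨hdet, le_of_lt h2, fun _ => h2⟩
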